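/- arXiv:2310.01998 — 3 statements merged into one kernel-verified Lean document; each statement's English description precedes it below -/
import Mathlib

section
/- Let K be a field complete with respect to a nonarchimedean multiplicative norm, and L/K an algebraic field extension. For x ∈ L with minimal polynomial f_x of degree m and constant coefficient a₀, the spectral norm of x equals |a₀|^(1/m). -/
open Polynomial

/-- The terms whose supremum defines the spectral value of a polynomial. -/
noncomputable def spectralValueTerms_old {K : Type*} [NormedField K] (p : K[X]) : ℕ → ℝ :=
  fun n : ℕ => if n < p.natDegree then ‖p.coeff n‖ ^ (1 / (p.natDegree - n : ℝ)) else 0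

/-- The spectral value of a polynomial. -/
noncomputable def spectralValue_old {K : Type*} [NormedField K] (p : K[X]) : ℝ :=
  iSup (spectralValueTerms_old p)

/-- The spectral norm of an element of an algebra: the spectral value of its minimal
polynomial. -/
noncomputable def spectralNorm_old (K : Type*) (L : Type*) [NormedField K] [Field L] [Algebra K L]
    (y : L) : ℝ :=
  spectralValue_old (minpoly K y)

section SpectralNormAux
open Polynomial IsUltrametricDist NNReal Filter Topology

namespace SpecAux
variable {K : Type*} [NormedField K]

noncomputable def hp (k : ℕ) (P : K[X]) : K[X] := Polynomial.divX^[k] P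

@[simp] lemma hp_coeff (k : ℕ) (P : K[X]) (n : ℕ) : (hp k P).coeff n = P.coeff (n + k) := by
  induction k generalizing P with
  | zero => simp [hp]
  | succ k ih =>
    show (Polynomial.divX^[k+1] P).coeff n = _
    rw [Function.iterate_succ, Function.comp_apply,
      show Polynomial.divX^[k] P.divX = hp k P.divX from rfl, ih, coeff_divX]
    congr 1

noncomputable def lp (k : ℕ) (P : K[X]) : K[X] := P - X ^ k * hp k P

lemma hp_lp (k : ℕ) (P : K[X]) : X ^ k * hp k P + lp k P = P := by
  rw [lp]; ring

lemma lp_coeff (k : ℕ) (P : K[X]) (n : ℕ) :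
    (lp k P).coeff n = if n < k then P.coeff n else 0 := by
  rw [lp, coeff_sub, mul_comm, coeff_mul_X_pow']
  by_cases h : n < k
  · rw [if_pos h, if_neg (by omega)]
    ring
  · rw [if_neg h, if_pos (by omega), hp_coeff, Nat.sub_add_cancel (by omega), sub_self]

lemma hp_sub (k : ℕ) (P Q : K[X]) : hp k (P - Q) = hp k P - hp k Q := by
  ext n; simp [coeff_sub]

lemma lp_sub (k : ℕ) (P Q : K[X]) : lp k (P - Q) = lp k P - lp k Q := by
  ext n; simp only [lp_coeff, coeff_sub]; split_ifs <;> simp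

noncomputable def W (s : ℝ≥0) (f : K[X]) : ℝ≥0 :=
  f.support.sup fun n => ‖f.coeff n‖₊ * s ^ n

lemma le_W (s : ℝ≥0) (f : K[X]) (n : ℕ) : ‖f.coeff n‖₊ * s ^ n ≤ W s f := by
  by_cases h : n ∈ f.support
  · exact Finset.le_sup (f := fun n => ‖f.coeff n‖₊ * s ^ n) h
  · rw [Polynomial.notMem_support_iff.mp h, nnnorm_zero, zero_mul]
    exact zero_le

lemma W_le {s : ℝ≥0} {f : K[X]} {C : ℝ≥0} (h : ∀ n, ‖f.coeff n‖₊ * s ^ n ≤ C) : W s f ≤ C :=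
  Finset.sup_le fun n _ => h n

lemma W_lt {s : ℝ≥0} {f : K[X]} {C : ℝ≥0} (hC : 0 < C)
    (h : ∀ n, ‖f.coeff n‖₊ * s ^ n < C) : W s f < C :=
  (Finset.sup_lt_iff hC).2 fun n _ => h n

lemma W_zero (s : ℝ≥0) : W s (0 : K[X]) = 0 := by simp [W]

lemma W_mul_le [IsUltrametricDist K] (s : ℝ≥0) (f g : K[X]) :
    W s (f * g) ≤ W s f * W s g := by
  refine W_le fun n => ?_
  rw [coeff_mul]
  obtain ⟨i, hi, hle⟩ := exists_norm_finset_sum_le_of_nonempty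
    (⟨(0, n), by simp⟩ : (Finset.HasAntidiagonal.antidiagonal n).Nonempty)
    (fun x : ℕ × ℕ => f.coeff x.1 * g.coeff x.2)
  have hle' : ‖∑ x ∈ Finset.HasAntidiagonal.antidiagonal n, f.coeff x.1 * g.coeff x.2‖₊
      ≤ ‖f.coeff i.1 * g.coeff i.2‖₊ := by exact_mod_cast hle
  have h12 : i.1 + i.2 = n := Finset.HasAntidiagonal.mem_antidiagonal.mp hi
  calc ‖∑ x ∈ Finset.HasAntidiagonal.antidiagonal n, f.coeff x.1 * g.coeff x.2‖₊ * s ^ n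
      ≤ ‖f.coeff i.1 * g.coeff i.2‖₊ * s ^ n := by gcongr
    _ = (‖f.coeff i.1‖₊ * s ^ i.1) * (‖g.coeff i.2‖₊ * s ^ i.2) := by
        rw [nnnorm_mul, ← h12, pow_add]; ring
    _ ≤ W s f * W s g := mul_le_mul' (le_W ..) (le_W ..)

lemma W_sub_le [IsUltrametricDist K] (s : ℝ≥0) (f g : K[X]) :
    W s (f - g) ≤ max (W s f) (W s g) := by
  refine W_le fun n => ?_
  rw [coeff_sub, sub_eq_add_neg]
  calc ‖f.coeff n + -(g.coeff n)‖₊ * s ^ n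
      ≤ max ‖f.coeff n‖₊ ‖-(g.coeff n)‖₊ * s ^ n := by gcongr; exact nnnorm_add_le_max _ _
    _ = max (‖f.coeff n‖₊ * s ^ n) (‖g.coeff n‖₊ * s ^ n) := by
        rw [nnnorm_neg, max_mul_of_nonneg _ _ zero_le]
    _ ≤ max (W s f) (W s g) := max_le_max (le_W ..) (le_W ..)

lemma W_add_le [IsUltrametricDist K] (s : ℝ≥0) (f g : K[X]) :
    W s (f + g) ≤ max (W s f) (W s g) := by
  refine W_le fun n => ?_
  rw [coeff_add]
  calc ‖f.coeff n + g.coeff n‖₊ * s ^ n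
      ≤ max ‖f.coeff n‖₊ ‖g.coeff n‖₊ * s ^ n := by gcongr; exact nnnorm_add_le_max _ _
    _ = max (‖f.coeff n‖₊ * s ^ n) (‖g.coeff n‖₊ * s ^ n) := by
        rw [max_mul_of_nonneg _ _ zero_le]
    _ ≤ max (W s f) (W s g) := max_le_max (le_W ..) (le_W ..)

lemma W_neg (s : ℝ≥0) (f : K[X]) : W s (-f) = W s f := by
  simp [W, Polynomial.support_neg, coeff_neg, nnnorm_neg]

lemma W_lp_le (s : ℝ≥0) (k : ℕ) (P : K[X]) : W s (lp k P) ≤ W s P := by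
  refine W_le fun n => ?_
  rw [lp_coeff]
  split_ifs
  · exact le_W ..
  · simp

lemma W_hp_le {s : ℝ≥0} (hs : 0 < s) (k : ℕ) (P : K[X]) : W s (hp k P) ≤ W s P / s ^ k := by
  refine W_le fun n => ?_
  rw [le_div_iff₀ (pow_pos hs k), hp_coeff, mul_assoc, ← pow_add]
  exact le_W ..

/-- The Newton iteration for factoring `X^k * B + A`. -/
noncomputable def seq (k : ℕ) (A B : K[X]) : ℕ → K[X] × K[X]
  | 0 => (0, 0)
  | j+1 =>
    let u := (seq k A B j).1
    let v := (seq k A B j).2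
    let R := A - u * v - u * (B - 1)
    (lp k R, hp k R)

noncomputable def Rem (k : ℕ) (A B : K[X]) (j : ℕ) : K[X] :=
  A - (seq k A B j).1 * (seq k A B j).2 - (seq k A B j).1 * (B - 1)

lemma seq_succ (k : ℕ) (A B : K[X]) (j : ℕ) :
    seq k A B (j+1) = (lp k (Rem k A B j), hp k (Rem k A B j)) := rfl

lemma seq_key (k : ℕ) (A B : K[X]) (j : ℕ) :
    X ^ k * (seq k A B (j+1)).2 + (seq k A B (j+1)).1 = Rem k A B j := by
  rw [seq_succ]
  exact hp_lp k _

section Estimates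

variable [IsUltrametricDist K] {s : ℝ≥0} (hs : 0 < s) {k : ℕ} {A B : K[X]} {ε : ℝ≥0}
  (hε1 : ε < 1) (hA : W s A ≤ ε * s ^ k) (hB : W s (B - 1) ≤ ε)

include hs hε1 hA hB

lemma seq_bound : ∀ j, W s (seq k A B j).1 ≤ ε * s ^ k ∧ W s (seq k A B j).2 ≤ ε := by
  intro j
  induction j with
  | zero => simp [seq, W_zero]
  | succ j ih =>
    have hR : W s (Rem k A B j) ≤ ε * s ^ k := by
      refine le_trans (W_sub_le s _ _) (max_le (le_trans (W_sub_le s _ _) (max_le hA ?_)) ?_)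
      · refine le_trans (W_mul_le s _ _) ?_
        calc W s (seq k A B j).1 * W s (seq k A B j).2 ≤ (ε * s ^ k) * ε :=
          mul_le_mul' ih.1 ih.2
        _ ≤ (ε * s ^ k) * 1 := by gcongr
        _ = ε * s ^ k := mul_one _
      · refine le_trans (W_mul_le s _ _) ?_
        calc W s (seq k A B j).1 * W s (B - 1) ≤ (ε * s ^ k) * ε := mul_le_mul' ih.1 hB
        _ ≤ (ε * s ^ k) * 1 := by gcongr
        _ = ε * s ^ k := mul_one _
    constructor
    · rw [seq_succ]
      exact le_trans (W_lp_le s k _) hR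
    · rw [seq_succ]
      refine le_trans (W_hp_le hs k _) ?_
      rw [div_le_iff₀ (pow_pos hs k)]
      exact hR

lemma seq_cauchy : ∀ j, W s ((seq k A B (j+1)).1 - (seq k A B j).1) ≤ ε ^ (j+1) * s ^ k ∧
    W s ((seq k A B (j+1)).2 - (seq k A B j).2) ≤ ε ^ (j+1) := by
  intro j
  induction j with
  | zero =>
    have hR0 : Rem k A B 0 = A := by simp [Rem, seq]
    constructor
    · rw [seq_succ, hR0]
      simpa [seq] using le_trans (W_lp_le s k A) (by simpa using hA)
    · rw [seq_succ, hR0]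
      simp only [seq, sub_zero]
      refine le_trans (W_hp_le hs k _) ?_
      rw [div_le_iff₀ (pow_pos hs k)]
      simpa using hA
  | succ j ih =>
    set u₀ := (seq k A B j).1
    set v₀ := (seq k A B j).2
    set u₁ := (seq k A B (j+1)).1
    set v₁ := (seq k A B (j+1)).2
    have hb0 := seq_bound hs hε1 hA hB j
    have hb1 := seq_bound hs hε1 hA hB (j+1)
    have hΔ : Rem k A B (j+1) - Rem k A B j =
        -(u₁ * (v₁ - v₀) + (u₁ - u₀) * v₀ + (u₁ - u₀) * (B - 1)) := by
      simp only [Rem]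
      ring
    have hRΔ : W s (Rem k A B (j+1) - Rem k A B j) ≤ ε ^ (j+2) * s ^ k := by
      rw [hΔ]
      have h1 : W s (u₁ * (v₁ - v₀)) ≤ ε ^ (j+2) * s ^ k := by
        refine le_trans (W_mul_le s _ _) ?_
        calc W s u₁ * W s (v₁ - v₀) ≤ (ε * s ^ k) * ε ^ (j+1) := mul_le_mul' hb1.1 ih.2
        _ = ε ^ (j+2) * s ^ k := by ring
      have h2 : W s ((u₁ - u₀) * v₀) ≤ ε ^ (j+2) * s ^ k := by
        refine le_trans (W_mul_le s _ _) ?_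
        calc W s (u₁ - u₀) * W s v₀ ≤ (ε ^ (j+1) * s ^ k) * ε := mul_le_mul' ih.1 hb0.2
        _ = ε ^ (j+2) * s ^ k := by ring
      have h3 : W s ((u₁ - u₀) * (B - 1)) ≤ ε ^ (j+2) * s ^ k := by
        refine le_trans (W_mul_le s _ _) ?_
        calc W s (u₁ - u₀) * W s (B - 1) ≤ (ε ^ (j+1) * s ^ k) * ε := mul_le_mul' ih.1 hB
        _ = ε ^ (j+2) * s ^ k := by ring
      rw [W_neg]
      exact le_trans (W_add_le s _ _)
        (max_le (le_trans (W_add_le s _ _) (max_le h1 h2)) h3)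
    constructor
    · have : (seq k A B (j+2)).1 - (seq k A B (j+1)).1 =
          lp k (Rem k A B (j+1) - Rem k A B j) := by
        rw [lp_sub, seq_succ, seq_succ]
      rw [this]
      exact le_trans (W_lp_le s k _) (by simpa [pow_succ] using hRΔ)
    · have : (seq k A B (j+2)).2 - (seq k A B (j+1)).2 =
          hp k (Rem k A B (j+1) - Rem k A B j) := by
        rw [hp_sub, seq_succ, seq_succ]
      rw [this]
      refine le_trans (W_hp_le hs k _) ?_
      rw [div_le_iff₀ (pow_pos hs k)]
      simpa [pow_succ] using hRΔ

end Estimates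



lemma seq_deg {k d : ℕ} {A B : K[X]} (hA' : ∀ i, k ≤ i → A.coeff i = 0)
    (hB' : ∀ i, d < i → B.coeff i = 0) :
    ∀ j, (∀ i, k ≤ i → ((seq k A B j).1).coeff i = 0) ∧
      (∀ i, d ≤ i → ((seq k A B j).2).coeff i = 0) := by
  intro j
  induction j with
  | zero => simp [seq]
  | succ j ih =>
    have hR : ∀ t, k + d ≤ t → (Rem k A B j).coeff t = 0 := by
      intro t ht
      rw [Rem, coeff_sub, coeff_sub, hA' t (by omega), coeff_mul, coeff_mul]
      rw [Finset.sum_eq_zero, Finset.sum_eq_zero]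
      · simp
      · intro x hx
        have hx' := Finset.HasAntidiagonal.mem_antidiagonal.mp hx
        by_cases h1 : k ≤ x.1
        · rw [ih.1 x.1 h1, zero_mul]
        · have hb : (B - 1).coeff x.2 = 0 := by
            rw [coeff_sub, hB' x.2 (by omega), Polynomial.coeff_one, if_neg (by omega), sub_zero]
          rw [hb, mul_zero]
      · intro x hx
        have hx' := Finset.HasAntidiagonal.mem_antidiagonal.mp hx
        by_cases h1 : k ≤ x.1
        · rw [ih.1 x.1 h1, zero_mul]
        · rw [ih.2 x.2 (by omega), mul_zero]
    constructor
    · intro i hi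
      rw [seq_succ, lp_coeff, if_neg (by omega)]
    · intro i hi
      rw [seq_succ, hp_coeff]
      exact hR _ (by omega)

lemma range_sum_coeff (N : ℕ) (c : ℕ → K) (t : ℕ) :
    (∑ i ∈ Finset.range N, C (c i) * X ^ i).coeff t = if t < N then c t else 0 := by
  rw [finset_sum_coeff]
  simp only [coeff_C_mul, coeff_X_pow, mul_ite, mul_one, mul_zero]
  rw [Finset.sum_ite_eq (Finset.range N) t c]
  simp [Finset.mem_range]

variable [CompleteSpace K] [IsUltrametricDist K]

lemma exists_factor (q : K[X]) (k : ℕ) (hqk : q.coeff k = 1)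
    (hk0 : 0 < k) (hkm : k < q.natDegree) {s : ℝ≥0} (hs : 0 < s)
    (hdom : ∀ n, n ≠ k → ‖q.coeff n‖₊ * s ^ n < s ^ k) :
    ∃ g h : K[X], q = g * h ∧ g.Monic ∧ g.natDegree = k := by
  set m := q.natDegree with hm
  set d := m - k with hd
  set A := lp k q with hA0
  set B := hp k q with hB0
  have hq : X ^ k * B + A = q := hp_lp k q
  have hA' : ∀ i, k ≤ i → A.coeff i = 0 := fun i hi => by
    rw [hA0, lp_coeff, if_neg (by omega)]
  have hB' : ∀ i, d < i → B.coeff i = 0 := fun i hi => by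
    rw [hB0, hp_coeff]
    exact coeff_eq_zero_of_natDegree_lt (by omega)
  have hB1 : (B - 1).coeff 0 = 0 := by
    rw [coeff_sub, hB0, hp_coeff, zero_add, hqk, Polynomial.coeff_one, if_pos rfl, sub_self]
  set ε : ℝ≥0 := max (W s A / s ^ k) (W s (B - 1)) with hε0
  have hsk : (0:ℝ≥0) < s ^ k := pow_pos hs k
  have hε1 : ε < 1 := by
    refine max_lt ((div_lt_one hsk).mpr ?_) ?_
    · refine W_lt hsk fun n => ?_
      rw [hA0, lp_coeff]
      split_ifs with h
      · exact hdom n (by omega)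
      · simpa using hsk
    · refine W_lt one_pos fun b => ?_
      rcases Nat.eq_zero_or_pos b with rfl | hb
      · simpa [hB1] using one_pos
      · have hcb : (B - 1).coeff b = q.coeff (b + k) := by
          rw [coeff_sub, hB0, hp_coeff, Polynomial.coeff_one, if_neg (by omega), sub_zero]
        have h1 := hdom (b + k) (by omega)
        rw [hcb]
        have : ‖q.coeff (b + k)‖₊ * s ^ b * s ^ k < s ^ k := by
          rw [mul_assoc, ← pow_add]
          exact h1
        calc ‖q.coeff (b + k)‖₊ * s ^ b
            = ‖q.coeff (b + k)‖₊ * s ^ b * s ^ k / s ^ k := by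
              rw [mul_div_assoc, div_self hsk.ne', mul_one]
          _ < s ^ k / s ^ k := by gcongr
          _ = 1 := div_self hsk.ne'
  have hA : W s A ≤ ε * s ^ k := by
    rw [← div_le_iff₀ hsk]
    exact le_max_left _ _
  have hB : W s (B - 1) ≤ ε := le_max_right _ _
  -- coefficientwise limits
  have hcu : ∀ i : ℕ, ∃ c : K, Tendsto (fun j => ((seq k A B j).1).coeff i) atTop (𝓝 c) := by
    intro i
    apply cauchySeq_tendsto_of_complete
    refine cauchySeq_of_le_geometric (ε:ℝ) ((ε * s ^ k / s ^ i : ℝ≥0) : ℝ) (by exact_mod_cast hε1)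
      fun j => ?_
    rw [dist_eq_norm]
    have h1 := (seq_cauchy hs hε1 hA hB j).1
    have h2 : ‖((seq k A B j).1 - (seq k A B (j+1)).1).coeff i‖₊ ≤ ε ^ (j+1) * s ^ k / s ^ i := by
      rw [le_div_iff₀ (pow_pos hs i)]
      calc ‖((seq k A B j).1 - (seq k A B (j+1)).1).coeff i‖₊ * s ^ i
          ≤ W s ((seq k A B j).1 - (seq k A B (j+1)).1) := le_W ..
        _ = W s ((seq k A B (j+1)).1 - (seq k A B j).1) := by rw [← W_neg]; ring_nf
        _ ≤ ε ^ (j+1) * s ^ k := h1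
    have h3 : (ε:ℝ) ^ (j+1) * (s:ℝ) ^ k / (s:ℝ) ^ i =
        ((ε * s ^ k / s ^ i : ℝ≥0) : ℝ) * (ε:ℝ) ^ j := by
      push_cast
      ring
    calc ‖((seq k A B j).1).coeff i - ((seq k A B (j+1)).1).coeff i‖
        = ‖((seq k A B j).1 - (seq k A B (j+1)).1).coeff i‖ := by rw [coeff_sub]
      _ ≤ (ε:ℝ) ^ (j+1) * (s:ℝ) ^ k / (s:ℝ) ^ i := by exact_mod_cast h2
      _ = _ := h3
  have hcv : ∀ i : ℕ, ∃ c : K, Tendsto (fun j => ((seq k A B j).2).coeff i) atTop (𝓝 c) := by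
    intro i
    apply cauchySeq_tendsto_of_complete
    refine cauchySeq_of_le_geometric (ε:ℝ) ((ε / s ^ i : ℝ≥0) : ℝ) (by exact_mod_cast hε1)
      fun j => ?_
    rw [dist_eq_norm]
    have h1 := (seq_cauchy hs hε1 hA hB j).2
    have h2 : ‖((seq k A B j).2 - ((seq k A B (j+1)).2)).coeff i‖₊ ≤ ε ^ (j+1) / s ^ i := by
      rw [le_div_iff₀ (pow_pos hs i)]
      calc ‖((seq k A B j).2 - (seq k A B (j+1)).2).coeff i‖₊ * s ^ i
          ≤ W s ((seq k A B j).2 - (seq k A B (j+1)).2) := le_W ..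
        _ = W s ((seq k A B (j+1)).2 - (seq k A B j).2) := by rw [← W_neg]; ring_nf
        _ ≤ ε ^ (j+1) := h1
    have h3 : (ε:ℝ) ^ (j+1) / (s:ℝ) ^ i = ((ε / s ^ i : ℝ≥0) : ℝ) * (ε:ℝ) ^ j := by
      push_cast
      ring
    calc ‖((seq k A B j).2).coeff i - ((seq k A B (j+1)).2).coeff i‖
        = ‖((seq k A B j).2 - (seq k A B (j+1)).2).coeff i‖ := by rw [coeff_sub]
      _ ≤ (ε:ℝ) ^ (j+1) / (s:ℝ) ^ i := by exact_mod_cast h2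
      _ = _ := h3
  choose cu hcu using hcu
  choose cv hcv using hcv
  set U : K[X] := ∑ i ∈ Finset.range k, C (cu i) * X ^ i with hU0
  set V : K[X] := ∑ i ∈ Finset.range d, C (cv i) * X ^ i with hV0
  have hdeg := seq_deg hA' hB'
  have hUt : ∀ i, Tendsto (fun j => ((seq k A B j).1).coeff i) atTop (𝓝 (U.coeff i)) := by
    intro i
    rw [hU0, range_sum_coeff]
    split_ifs with h
    · exact hcu i
    · have : (fun j => ((seq k A B j).1).coeff i) = fun _ => (0:K) :=
        funext fun j => (hdeg j).1 i (by omega)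
      rw [this]
      exact tendsto_const_nhds
  have hVt : ∀ i, Tendsto (fun j => ((seq k A B j).2).coeff i) atTop (𝓝 (V.coeff i)) := by
    intro i
    rw [hV0, range_sum_coeff]
    split_ifs with h
    · exact hcv i
    · have : (fun j => ((seq k A B j).2).coeff i) = fun _ => (0:K) :=
        funext fun j => (hdeg j).2 i (by omega)
      rw [this]
      exact tendsto_const_nhds
  have hpoly : ∀ j, X ^ k * (seq k A B (j+1)).2 + (seq k A B (j+1)).1
      + (seq k A B j).1 * (seq k A B j).2 + (seq k A B j).1 * (B - 1) = A := by
    intro j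
    rw [seq_key]
    rw [Rem]
    ring
  have hid : X ^ k * V + U + U * V + U * (B - 1) = A := by
    ext t
    have h1 : Tendsto (fun j => (X ^ k * (seq k A B (j+1)).2 + (seq k A B (j+1)).1
        + (seq k A B j).1 * (seq k A B j).2 + (seq k A B j).1 * (B - 1)).coeff t) atTop
        (𝓝 ((X ^ k * V + U + U * V + U * (B - 1)).coeff t)) := by
      simp only [coeff_add, coeff_mul]
      refine Tendsto.add (Tendsto.add (Tendsto.add ?_ ?_) ?_) ?_
      · exact tendsto_finset_sum _ fun x _ => (tendsto_const_nhds.mul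
          ((hVt x.2).comp (tendsto_add_atTop_nat 1)))
      · exact (hUt t).comp (tendsto_add_atTop_nat 1)
      · exact tendsto_finset_sum _ fun x _ => ((hUt x.1).mul (hVt x.2))
      · exact tendsto_finset_sum _ fun x _ => ((hUt x.1).mul tendsto_const_nhds)
    have h2 : (fun j => (X ^ k * (seq k A B (j+1)).2 + (seq k A B (j+1)).1
        + (seq k A B j).1 * (seq k A B j).2 + (seq k A B j).1 * (B - 1)).coeff t)
        = fun _ => A.coeff t := funext fun j => by rw [hpoly j]
    rw [h2] at h1
    exact tendsto_nhds_unique h1 tendsto_const_nhds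
  have hfac : (X ^ k + U) * (B + V) = q := by
    rw [← hq]
    linear_combination hid
  have hUdeg : U.degree < (X ^ k : K[X]).degree := by
    rw [degree_X_pow]
    refine lt_of_le_of_lt (degree_sum_le _ _) ?_
    rw [Finset.sup_lt_iff (by exact_mod_cast WithBot.bot_lt_coe k)]
    intro i hi
    refine lt_of_le_of_lt (degree_C_mul_X_pow_le _ _) ?_
    exact_mod_cast Finset.mem_range.mp hi
  have hgmon : (X ^ k + U).Monic := (monic_X_pow k).add_of_left hUdeg
  have hgdeg : (X ^ k + U).natDegree = k := by
    have : (X ^ k + U).degree = ((k:ℕ) : WithBot ℕ) := by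
      rw [degree_add_eq_left_of_degree_lt hUdeg, degree_X_pow]
    exact natDegree_eq_of_degree_eq_some this
  exact ⟨X ^ k + U, B + V, hfac.symm, hgmon, hgdeg⟩



lemma purity (p : K[X]) (hmo : p.Monic) (hirr : Irreducible p) {n : ℕ}
    (hn : n < p.natDegree) :
    ‖p.coeff n‖₊ ^ p.natDegree ≤ ‖p.coeff 0‖₊ ^ (p.natDegree - n) := by
  classical
  by_contra hbad
  push_neg at hbad
  set m := p.natDegree with hmdef
  have hm1 : 1 ≤ m := by omega
  -- n = 0 is impossible
  have hn1 : 1 ≤ n := by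
    rcases Nat.eq_zero_or_pos n with rfl | h
    · simp at hbad
    · exact h
  have hm2 : 2 ≤ m := by omega
  have hpne : p ≠ 0 := hmo.ne_zero
  have ha0 : p.coeff 0 ≠ 0 := by
    intro h0
    obtain ⟨w, hw⟩ := (Polynomial.X_dvd_iff).mpr h0
    have hwne : w ≠ 0 := by rintro rfl; rw [mul_zero] at hw; exact hpne hw
    rcases hirr.isUnit_or_isUnit hw with h | h
    · exact Polynomial.not_isUnit_X h
    · have := Polynomial.natDegree_eq_zero_of_isUnit h
      have : m = 1 := by
        rw [hmdef, hw, Polynomial.natDegree_mul Polynomial.X_ne_zero hwne,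
          Polynomial.natDegree_X, this]
      omega
  have han : p.coeff n ≠ 0 := by
    intro h0
    rw [h0, nnnorm_zero, zero_pow (by omega : m ≠ 0)] at hbad
    simp at hbad
  set y := ‖p.coeff 0‖₊ with hydef
  have hy : 0 < y := by simpa [hydef] using ha0
  set T : Finset ℕ := (Finset.range (m+1)).filter fun i => 1 ≤ i ∧ p.coeff i ≠ 0 with hT
  have hmT : m ∈ T := by
    refine Finset.mem_filter.mpr ⟨Finset.mem_range.mpr (by omega), hm1, ?_⟩
    rw [hmdef, Polynomial.Monic.coeff_natDegree hmo]
    exact one_ne_zero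
  have hnT : n ∈ T := by
    exact Finset.mem_filter.mpr ⟨Finset.mem_range.mpr (by omega), hn1, han⟩
  have hTprop : ∀ i ∈ T, 1 ≤ i ∧ i ≤ m ∧ p.coeff i ≠ 0 := by
    intro i hi
    obtain ⟨h1, h2, h3⟩ := Finset.mem_filter.mp hi
    exact ⟨h2, by have := Finset.mem_range.mp h1; omega, h3⟩
  set t : ℕ → ℝ≥0 := fun i => (y / ‖p.coeff i‖₊) ^ ((i:ℝ)⁻¹) with ht
  have htpow : ∀ i ∈ T, (t i) ^ i = y / ‖p.coeff i‖₊ := by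
    intro i hi
    exact NNReal.rpow_inv_natCast_pow _ (by have := (hTprop i hi).1; omega)
  obtain ⟨k₀, hk₀T, hk₀min⟩ := T.exists_min_image t ⟨m, hmT⟩
  set S : Finset ℕ := T.filter fun i => t i = t k₀ with hS
  have hk₀S : k₀ ∈ S := by simp [hS, hk₀T]
  set k := S.max' ⟨k₀, hk₀S⟩ with hk
  have hkS : k ∈ S := S.max'_mem _
  have hkT : k ∈ T := (Finset.mem_filter.mp hkS).1
  have htk : t k = t k₀ := (Finset.mem_filter.mp hkS).2
  have hkmin : ∀ i ∈ T, t k ≤ t i := fun i hi => htk ▸ hk₀min i hi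
  have hklt : ∀ i ∈ T, k < i → t k < t i := by
    intro i hi hik
    rcases lt_or_eq_of_le (hkmin i hi) with h | h
    · exact h
    · exfalso
      have hiS : i ∈ S := by
        simp only [hS, Finset.mem_filter]
        exact ⟨hi, by rw [← h, htk]⟩
      exact absurd (Finset.le_max' S i hiS) (by omega)
  set s₀ := t k with hs₀
  have hxk : (0:ℝ≥0) < ‖p.coeff k‖₊ := by
    have := (hTprop k hkT).2.2
    simpa using this
  have hs₀pos : 0 < s₀ := NNReal.rpow_pos (div_pos hy hxk)
  have heq : ‖p.coeff k‖₊ * s₀ ^ k = y := by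
    rw [hs₀, htpow k hkT, mul_div_cancel₀ _ hxk.ne']
  have hle : ∀ i ∈ T, ‖p.coeff i‖₊ * s₀ ^ i ≤ y := by
    intro i hi
    have h1 : s₀ ^ i ≤ (t i) ^ i := pow_le_pow_left₀ zero_le (hkmin i hi) i
    rw [htpow i hi] at h1
    calc ‖p.coeff i‖₊ * s₀ ^ i ≤ ‖p.coeff i‖₊ * (y / ‖p.coeff i‖₊) := by gcongr
      _ = y := mul_div_cancel₀ _ (by simpa using (hTprop i hi).2.2)
  have hlt : ∀ i ∈ T, k < i → ‖p.coeff i‖₊ * s₀ ^ i < y := by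
    intro i hi hik
    have hxi : (0:ℝ≥0) < ‖p.coeff i‖₊ := by simpa using (hTprop i hi).2.2
    have h1 : s₀ ^ i < (t i) ^ i :=
      pow_lt_pow_left₀ (hklt i hi hik) zero_le (by have := (hTprop i hi).1; omega)
    rw [htpow i hi] at h1
    calc ‖p.coeff i‖₊ * s₀ ^ i < ‖p.coeff i‖₊ * (y / ‖p.coeff i‖₊) := by gcongr
      _ = y := mul_div_cancel₀ _ hxi.ne'
  have hk1 : 1 ≤ k := (hTprop k hkT).1
  have hkm : k ≤ m := (hTprop k hkT).2.1
  rcases eq_or_lt_of_le hkm with hkeq | hklt'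
  -- case k = m : purity holds at n, contradiction
  · have hxm : ‖p.coeff k‖₊ = 1 := by
      rw [hkeq, hmdef, hmo.coeff_natDegree, nnnorm_one]
    have hs₀m : s₀ ^ m = y := by
      have := heq
      rw [hxm, one_mul, hkeq] at this
      exact this
    have h1 : (‖p.coeff n‖₊ * s₀ ^ n) ^ m ≤ y ^ m := pow_le_pow_left₀ zero_le (hle n hnT) m
    have h2 : ‖p.coeff n‖₊ ^ m * y ^ n ≤ y ^ (m - n) * y ^ n := by
      calc ‖p.coeff n‖₊ ^ m * y ^ n = ‖p.coeff n‖₊ ^ m * (s₀ ^ m) ^ n := by rw [hs₀m]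
        _ = (‖p.coeff n‖₊ * s₀ ^ n) ^ m := by rw [mul_pow, ← pow_mul, ← pow_mul, Nat.mul_comm]
        _ ≤ y ^ m := h1
        _ = y ^ (m - n) * y ^ n := by rw [← pow_add]; congr 1; omega
    have h3 : ‖p.coeff n‖₊ ^ m ≤ y ^ (m - n) :=
      le_of_mul_le_mul_right h2 (pow_pos hy n)
    exact absurd h3 (not_le.mpr hbad)
  -- case k < m : Hensel factorization contradicts irreducibility
  · set T' : Finset ℕ := T.filter fun i => k < i with hT'
    have hmT' : m ∈ T' := by simp [hT', hmT, hklt']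
    set t2 : ℕ → ℝ≥0 := fun i => (‖p.coeff k‖₊ / ‖p.coeff i‖₊) ^ (((i - k : ℕ):ℝ)⁻¹) with ht2
    set s₂ := T'.inf' ⟨m, hmT'⟩ t2 with hs₂
    have hs₀s₂ : s₀ < s₂ := by
      rw [hs₂]; refine (Finset.lt_inf'_iff ..).2 ?_
      intro i hi
      have hiT : i ∈ T := (Finset.mem_filter.mp hi).1
      have hik : k < i := (Finset.mem_filter.mp hi).2
      have hxi : (0:ℝ≥0) < ‖p.coeff i‖₊ := by simpa using (hTprop i hiT).2.2
      have h1 : ‖p.coeff i‖₊ * s₀ ^ i < ‖p.coeff k‖₊ * s₀ ^ k := by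
        rw [heq]; exact hlt i hiT hik
      have h2 : ‖p.coeff i‖₊ * s₀ ^ (i - k) * s₀ ^ k < ‖p.coeff k‖₊ * s₀ ^ k := by
        rw [mul_assoc, ← pow_add]
        have : i - k + k = i := by omega
        rw [this]
        exact h1
      have h3 : ‖p.coeff i‖₊ * s₀ ^ (i - k) < ‖p.coeff k‖₊ :=
        lt_of_mul_lt_mul_right h2 zero_le
      have h4 : s₀ ^ (i - k) < ‖p.coeff k‖₊ / ‖p.coeff i‖₊ := by
        rw [lt_div_iff₀ hxi, mul_comm]
        exact h3
      have h5 := NNReal.rpow_lt_rpow h4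
        (inv_pos.mpr (Nat.cast_pos.mpr (by omega : 0 < i - k)) : (0:ℝ) < ((i - k : ℕ):ℝ)⁻¹)
      have h6 : s₀ = (s₀ ^ (i - k)) ^ (((i - k : ℕ):ℝ))⁻¹ :=
        (NNReal.pow_rpow_inv_natCast _ (by omega : i - k ≠ 0)).symm
      rw [h6]
      exact h5
    obtain ⟨s, hss₀, hss₂⟩ := exists_between hs₀s₂
    have hspos : 0 < s := hs₀pos.trans hss₀
    have hdom : ∀ i, i ≠ k → ‖p.coeff i‖₊ * s ^ i < ‖p.coeff k‖₊ * s ^ k := by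
      intro i hik
      by_cases hiz : p.coeff i = 0
      · rw [hiz, nnnorm_zero, zero_mul]
        positivity
      by_cases hi0 : i = 0
      · subst hi0
        rw [pow_zero, mul_one]
        calc y = ‖p.coeff k‖₊ * s₀ ^ k := heq.symm
          _ < ‖p.coeff k‖₊ * s ^ k :=
            (mul_lt_mul_iff_right₀ hxk).mpr (pow_lt_pow_left₀ hss₀ zero_le (by omega))
      have him : i ≤ m := by
        by_contra h
        exact hiz (coeff_eq_zero_of_natDegree_lt (by omega))
      have hiT : i ∈ T := Finset.mem_filter.mpr ⟨Finset.mem_range.mpr (by omega), by omega, hiz⟩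
      rcases lt_or_gt_of_ne hik with hlt2 | hgt2
      -- i < k
      · have h1 : ‖p.coeff i‖₊ * s₀ ^ i ≤ ‖p.coeff k‖₊ * s₀ ^ (k - i) * s₀ ^ i := by
          rw [mul_assoc, ← pow_add, (by omega : k - i + i = k), heq]
          exact hle i hiT
        have h2 : ‖p.coeff i‖₊ ≤ ‖p.coeff k‖₊ * s₀ ^ (k - i) :=
          le_of_mul_le_mul_right h1 (pow_pos hs₀pos i)
        have h3 : ‖p.coeff i‖₊ < ‖p.coeff k‖₊ * s ^ (k - i) := by
          refine lt_of_le_of_lt h2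
            ((mul_lt_mul_iff_right₀ hxk).mpr (pow_lt_pow_left₀ hss₀ zero_le (by omega)))
        calc ‖p.coeff i‖₊ * s ^ i < (‖p.coeff k‖₊ * s ^ (k - i)) * s ^ i :=
              mul_lt_mul_of_pos_right h3 (pow_pos hspos i)
          _ = ‖p.coeff k‖₊ * s ^ k := by rw [mul_assoc, ← pow_add, (by omega : k - i + i = k)]
      -- k < i
      · have hiT' : i ∈ T' := Finset.mem_filter.mpr ⟨hiT, hgt2⟩
        have h1 : s < t2 i := lt_of_lt_of_le hss₂ (Finset.inf'_le _ hiT')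
        have h2 : s ^ (i - k) < ‖p.coeff k‖₊ / ‖p.coeff i‖₊ := by
          have := pow_lt_pow_left₀ h1 zero_le (by omega : i - k ≠ 0)
          rwa [ht2, NNReal.rpow_inv_natCast_pow _ (by omega : i - k ≠ 0)] at this
        have hxi : (0:ℝ≥0) < ‖p.coeff i‖₊ := by simpa using hiz
        have h3 : ‖p.coeff i‖₊ * s ^ (i - k) < ‖p.coeff k‖₊ := by
          rw [lt_div_iff₀ hxi, mul_comm] at h2
          exact h2
        calc ‖p.coeff i‖₊ * s ^ i = (‖p.coeff i‖₊ * s ^ (i - k)) * s ^ k := by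
              rw [mul_assoc, ← pow_add, (by omega : i - k + k = i)]
          _ < ‖p.coeff k‖₊ * s ^ k :=
              mul_lt_mul_of_pos_right h3 (pow_pos hspos k)
    -- normalize and factor
    have hck : p.coeff k ≠ 0 := (hTprop k hkT).2.2
    set q : K[X] := C (p.coeff k)⁻¹ * p with hq
    have hqk : q.coeff k = 1 := by
      rw [hq, coeff_C_mul, inv_mul_cancel₀ hck]
    have hqdeg : q.natDegree = m := by
      rw [hq, natDegree_C_mul (inv_ne_zero hck), hmdef]
    have hqdom : ∀ i, i ≠ k → ‖q.coeff i‖₊ * s ^ i < s ^ k := by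
      intro i hik
      have h1 := hdom i hik
      rw [hq, coeff_C_mul, nnnorm_mul, nnnorm_inv, mul_assoc]
      calc ‖p.coeff k‖₊⁻¹ * (‖p.coeff i‖₊ * s ^ i)
          < ‖p.coeff k‖₊⁻¹ * (‖p.coeff k‖₊ * s ^ k) :=
            (mul_lt_mul_iff_right₀ (by positivity)).mpr h1
        _ = s ^ k := by rw [← mul_assoc, inv_mul_cancel₀ hxk.ne', one_mul]
    obtain ⟨g, h, hfac, hgmon, hgdeg⟩ := exists_factor q k hqk (by omega)
      (by rw [hqdeg]; exact hklt') hspos hqdom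
    have hpfac : p = (C (p.coeff k) * g) * h := by
      rw [mul_assoc, ← hfac, hq, ← mul_assoc, ← C_mul, mul_inv_cancel₀ hck, C_1, one_mul]
    have hgne : g ≠ 0 := hgmon.ne_zero
    have hqne : q ≠ 0 := by
      intro h0
      rw [h0, natDegree_zero] at hqdeg
      omega
    have hhne : h ≠ 0 := by
      intro h0
      rw [h0, mul_zero] at hfac
      exact hqne hfac
    rcases hirr.isUnit_or_isUnit hpfac with hu | hu
    · have := Polynomial.natDegree_eq_zero_of_isUnit hu
      rw [natDegree_C_mul hck, hgdeg] at this
      omega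
    · have h0 := Polynomial.natDegree_eq_zero_of_isUnit hu
      have := Polynomial.natDegree_mul hgne hhne
      rw [← hfac, hqdeg, hgdeg, h0] at this
      omega



lemma rpow_step {x y : ℝ} (hx : 0 ≤ x) (hy : 0 ≤ y) {n m : ℕ} (hnm : n < m)
    (h : x ^ m ≤ y ^ (m - n)) :
    x ^ (1 / ((m:ℝ) - (n:ℝ))) ≤ y ^ (1 / (m:ℝ)) := by
  set a := m - n with ha
  have ham : ((m:ℝ) - (n:ℝ)) = (a:ℝ) := by rw [ha, Nat.cast_sub hnm.le]
  have ha0 : (0:ℝ) < a := by exact_mod_cast Nat.lt_of_lt_of_le Nat.zero_lt_one (by omega)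
  have hm0 : (0:ℝ) < m := by exact_mod_cast (by omega : 0 < m)
  have h1 : (x ^ m) ^ (1 / ((m:ℝ) * a)) ≤ (y ^ a) ^ (1 / ((m:ℝ) * a)) :=
    Real.rpow_le_rpow (by positivity) h (by positivity)
  rw [← Real.rpow_natCast x m, ← Real.rpow_natCast y a, ← Real.rpow_mul hx,
    ← Real.rpow_mul hy] at h1
  have e1 : (m:ℝ) * (1 / ((m:ℝ) * a)) = 1 / (a:ℝ) := by field_simp
  have e2 : (a:ℝ) * (1 / ((m:ℝ) * a)) = 1 / (m:ℝ) := by field_simp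
  rw [e1, e2] at h1
  rw [ham]
  exact h1


end SpecAux

open Polynomial SpecAux in
theorem spectralNorm_eq_root_zero_coeff_aux {K : Type*} [NormedField K] [CompleteSpace K]
    (h_na : IsNonarchimedean (norm : K → ℝ)) {L : Type*} [Field L] [Algebra K L]
    [Algebra.IsAlgebraic K L] (x : L) :
    iSup (fun n : ℕ => if n < (minpoly K x).natDegree
        then ‖(minpoly K x).coeff n‖ ^ (1 / ((minpoly K x).natDegree - n : ℝ)) else 0) =
      ‖(minpoly K x).coeff 0‖ ^ (1 / (minpoly K x).natDegree : ℝ) := by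
  letI : IsUltrametricDist K := IsUltrametricDist.isUltrametricDist_of_isNonarchimedean_norm h_na
  have hint : IsIntegral K x := Algebra.IsIntegral.isIntegral x
  set p := minpoly K x with hp
  set m := p.natDegree with hm
  have hm0 : 0 < m := minpoly.natDegree_pos hint
  have hmo : p.Monic := minpoly.monic hint
  have hirr : Irreducible p := minpoly.irreducible hint
  set B : ℝ := ‖p.coeff 0‖ ^ (1 / (m:ℝ)) with hB
  have hB0 : 0 ≤ B := Real.rpow_nonneg (norm_nonneg _) _
  have hterms : ∀ n : ℕ, (if n < m then ‖p.coeff n‖ ^ (1 / ((m:ℝ) - (n:ℝ))) else 0) ≤ B := by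
    intro n
    split_ifs with h
    · have hpur := purity p hmo hirr h
      have hpur' : ‖p.coeff n‖ ^ m ≤ ‖p.coeff 0‖ ^ (m - n) := by exact_mod_cast hpur
      exact rpow_step (norm_nonneg _) (norm_nonneg _) h hpur'
    · exact hB0
  have h0 : (if (0:ℕ) < m then ‖p.coeff 0‖ ^ (1 / ((m:ℝ) - ((0:ℕ):ℝ))) else 0) = B := by
    rw [if_pos hm0, hB]
    norm_num
  refine le_antisymm (ciSup_le hterms) ?_
  rw [← h0]
  exact le_ciSup ⟨B, by rintro r ⟨i, rfl⟩; exact hterms i⟩ 0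

end SpectralNormAux

/-- If `K` is complete with respect to a nonarchimedean multiplicative norm and `L/K` is an
algebraic extension, then the spectral norm of `x : L` with minimal polynomial of degree `m` and
constant coefficient `a₀` equals `‖a₀‖ ^ (1/m)`. -/
theorem spectralNorm_eq_root_zero_coeff {K : Type*} [NormedField K] [CompleteSpace K]
    (h_na : IsNonarchimedean (norm : K → ℝ)) {L : Type*} [Field L] [Algebra K L]
    [Algebra.IsAlgebraic K L] (x : L) :
    spectralNorm_old K L x =
      ‖(minpoly K x).coeff 0‖ ^ (1 / (minpoly K x).natDegree : ℝ) := by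
  rw [spectralNorm_old, spectralValue_old]
  exact spectralNorm_eq_root_zero_coeff_aux h_na x
end

section
/- For a field K, there is a ring isomorphism between the field of Laurent series K((X)) and the completion of the field of rational functions K(X) with respect to the X-adic valuation; moreover it restricts to a ring isomorphism between the power series ring K[[X]] and the unit ball of the completion. -/
open Multiplicative LaurentSeries PowerSeries IsDedekindDomain

private lemma cast_coe_aux {A R : Type*} [Ring A] [Ring R] {S T : Subring R} (h : T = S)
    (e : A ≃+* S) (a : A) (b : R) (hb : (e a : R) = b) :
    ((cast (by rw [h]) e : A ≃+* T) a : R) = b := by subst h; exact hb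

private lemma powerSeriesEquivSubring_coe (K : Type*) [Field K] (F : PowerSeries K) :
    ((powerSeriesEquivSubring K F : powerSeries_as_subring K) : LaurentSeries K)
      = HahnSeries.ofPowerSeries ℤ K F := by
  simp only [powerSeriesEquivSubring, RingEquiv.coe_trans, eq_mpr_eq_cast]
  rfl

/-- The field of Laurent series `K⸨X⸩` is isomorphic, as a ring, to the `X`-adic completion of
the field of rational functions `K(X)`; moreover the isomorphism restricts to a ring isomorphism
between the power series ring `K⟦X⟧` and the unit ball of the completion. -/
theorem laurentSeries_ringEquiv_adicCompletion (K : Type*) [Field K] :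
    ∃ (e : LaurentSeries K ≃+* (Polynomial.idealX K).adicCompletion (RatFunc K))
      (e₀ : PowerSeries K ≃+* (Polynomial.idealX K).adicCompletionIntegers (RatFunc K)),
      ∀ F : PowerSeries K,
        ((e₀ F : (Polynomial.idealX K).adicCompletionIntegers (RatFunc K)) :
            (Polynomial.idealX K).adicCompletion (RatFunc K)) = e (F : LaurentSeries K) := by
  refine ⟨LaurentSeriesRingEquiv K, powerSeriesRingEquiv K, fun F => ?_⟩
  have h1 : ((powerSeriesRingEquiv K F :
        (Polynomial.idealX K).adicCompletionIntegers (RatFunc K)) :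
      (Polynomial.idealX K).adicCompletion (RatFunc K))
      = LaurentSeriesRingEquiv K
        ((powerSeriesEquivSubring K F : powerSeries_as_subring K) : LaurentSeries K) := rfl
  rw [h1, powerSeriesEquivSubring_coe]
end

section
/- There is a ring isomorphism between the p-adic integers ℤ_p and the unit ball of the completion of ℚ with respect to the p-adic (height-one-prime) adic valuation; consequently the residue field of this unit ball is isomorphic to the field with p elements. -/
open Multiplicative IsDedekindDomain

/-- The prime ideal `(p)` of `ℤ`, as a height-one prime. -/
noncomputable def pHeightOneIdeal (p : ℕ) [hp : Fact p.Prime] : HeightOneSpectrum ℤ where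
  asIdeal := Ideal.span {(p : ℤ)}
  isPrime := by
    rw [Ideal.span_singleton_prime (by exact_mod_cast hp.out.ne_zero)]
    exact Int.prime_iff_natAbs_prime.mpr (by simpa using hp.out)
  ne_bot := by
    simp only [ne_eq, Ideal.span_singleton_eq_bot]
    exact_mod_cast hp.out.ne_zero

section Aux

variable (p : ℕ) [hp : Fact p.Prime]

lemma intVal_eq (r : ℤ) (hr : r ≠ 0) :
    (pHeightOneIdeal p).intValuation r = ofAdd (-(padicValInt p r : ℤ)) := by
  have key : ∀ n : ℕ, (pHeightOneIdeal p).intValuationDef r ≤ ofAdd (-(n : ℤ)) ↔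
      n ≤ padicValInt p r := by
    intro n
    change (pHeightOneIdeal p).intValuation r ≤ WithZero.exp (-(n:ℤ)) ↔ _
    rw [HeightOneSpectrum.intValuation_le_pow_iff_dvd]
    show Ideal.span {(p:ℤ)} ^ n ∣ _ ↔ _
    rw [Ideal.span_singleton_pow, span_singleton_dvd_span_singleton_iff_dvd]
    rw [padicValInt_dvd_iff]
    simp [hr]
  rw [HeightOneSpectrum.intValuation_apply]
  have h1 := (key (padicValInt p r)).mpr le_rfl
  have h2 : ¬ (pHeightOneIdeal p).intValuationDef r ≤ ofAdd (-(padicValInt p r + 1 : ℕ) : ℤ) := by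
    rw [show ((padicValInt p r + 1 : ℕ) : ℤ) = ((padicValInt p r + 1 : ℕ) : ℤ) from rfl, key]
    omega
  refine le_antisymm h1 ?_
  by_contra hcon
  push_neg at hcon
  have hne := (pHeightOneIdeal p).intValuation_ne_zero r hr
  rw [HeightOneSpectrum.intValuation_apply] at hne
  set x := (pHeightOneIdeal p).intValuationDef r with hx
  rcases WithZero.ne_zero_iff_exists.mp hne with ⟨m, hm⟩
  rw [← hm] at hcon h2
  rw [WithZero.coe_lt_coe] at hcon
  apply h2
  rw [WithZero.coe_le_coe]
  have h3 : Multiplicative.toAdd m < -(padicValInt p r : ℤ) := hcon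
  have h4 : Multiplicative.toAdd m ≤ -(padicValInt p r + 1 : ℤ) := by omega
  calc m = ofAdd (Multiplicative.toAdd m) := rfl
  _ ≤ ofAdd (-(padicValInt p r + 1 : ℤ)) := h4
  _ = ofAdd (-((padicValInt p r + 1 : ℕ) : ℤ)) := by push_cast; ring_nf

lemma val_eq (q : ℚ) (hq : q ≠ 0) :
    (pHeightOneIdeal p).valuation ℚ (q : ℚ) = ofAdd (-padicValRat p q) := by
  have hnum : (q.num : ℚ) ≠ 0 := Int.cast_ne_zero.mpr (Rat.num_ne_zero.mpr hq)
  have hden : ((q.den : ℤ) : ℚ) ≠ 0 := by exact_mod_cast q.den_ne_zero  -- may fail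
  conv_lhs => rw [← Rat.num_div_den q]
  rw [map_div₀]
  rw [show ((q.num : ℚ)) = algebraMap ℤ ℚ q.num from rfl,
    show ((q.den : ℚ)) = algebraMap ℤ ℚ (q.den : ℤ) by push_cast; rfl,
    HeightOneSpectrum.valuation_of_algebraMap, HeightOneSpectrum.valuation_of_algebraMap,
    intVal_eq p q.num (Rat.num_ne_zero.mpr hq), intVal_eq p (q.den : ℤ) (by exact_mod_cast q.den_ne_zero)]
  rw [padicValRat]
  have : padicValInt p (q.den : ℤ) = padicValNat p q.den := by
    rw [padicValInt, Int.natAbs_natCast]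
  rw [this]
  rw [← WithZero.coe_div, WithZero.coe_inj]
  rw [← ofAdd_sub]
  congr 1
  push_cast
  ring

lemma norm_ratCast (q : ℚ) (hq : q ≠ 0) :
    ‖(q : ℚ_[p])‖ = (p : ℝ) ^ (-padicValRat p q) := by
  rw [Padic.eq_padicNorm, padicNorm.eq_zpow_of_nonzero hq]
  push_cast
  ring_nf

lemma val_lt_iff (q : ℚ) (m : ℤ) :
    (pHeightOneIdeal p).valuation ℚ (q : ℚ) < (ofAdd m : Multiplicative ℤ) ↔
      ‖(q : ℚ_[p])‖ < (p : ℝ) ^ m := by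
  have hp1 : (1 : ℝ) < p := by exact_mod_cast hp.out.one_lt
  rcases eq_or_ne q 0 with rfl | hq
  · simp [zpow_pos (by positivity : (0:ℝ) < p) m, WithZero.zero_lt_coe]
  · rw [val_eq p q hq, norm_ratCast p q hq, WithZero.coe_lt_coe,
      Multiplicative.ofAdd_lt, zpow_lt_zpow_iff_right₀ hp1]

lemma val_le_one_iff (q : ℚ) :
    (pHeightOneIdeal p).valuation ℚ (q : ℚ) ≤ 1 ↔ ‖(q : ℚ_[p])‖ ≤ 1 := by
  have hp1 : (1 : ℝ) < p := by exact_mod_cast hp.out.one_lt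
  rcases eq_or_ne q 0 with rfl | hq
  · simp
  · rw [val_eq p q hq, norm_ratCast p q hq,
      show (1 : WithZero (Multiplicative ℤ)) = ((1 : Multiplicative ℤ) : WithZero (Multiplicative ℤ)) from rfl, WithZero.coe_le_coe,
      show (1 : ℝ) = (p:ℝ) ^ (0:ℤ) by simp, zpow_le_zpow_iff_right₀ hp1]
    rw [show (1 : Multiplicative ℤ) = ofAdd (0:ℤ) from rfl, Multiplicative.ofAdd_le]

open Filter in
lemma uniformInducing_coe :
    IsUniformInducing (fun x : WithVal ((pHeightOneIdeal p).valuation ℚ) =>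
      ((WithVal.ofVal x : ℚ) : ℚ_[p])) := by
  have hval : ∀ x : WithVal ((pHeightOneIdeal p).valuation ℚ),
      Valued.v x = (pHeightOneIdeal p).valuation ℚ (WithVal.ofVal x) := fun x => rfl
  have hp1 : (1 : ℝ) < p := by exact_mod_cast hp.out.one_lt
  constructor
  have B1 := Valued.hasBasis_uniformity (WithVal ((pHeightOneIdeal p).valuation ℚ))
    (WithZero (Multiplicative ℤ))
  have B2 : (Filter.comap (fun x : WithVal ((pHeightOneIdeal p).valuation ℚ) ×
        WithVal ((pHeightOneIdeal p).valuation ℚ) =>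
        (((WithVal.ofVal x.1 : ℚ) : ℚ_[p]), ((WithVal.ofVal x.2 : ℚ) : ℚ_[p])))
        (uniformity ℚ_[p])).HasBasis
      (fun ε : ℝ => 0 < ε)
      (fun ε => { x | ‖((WithVal.ofVal x.2 - WithVal.ofVal x.1 : ℚ) : ℚ_[p])‖ < ε }) := by
    refine (Metric.uniformity_basis_dist.comap _).to_hasBasis ?_ ?_
    · rintro ε hε
      refine ⟨ε, hε, fun x hx => ?_⟩
      simp only [Set.mem_preimage, Set.mem_setOf_eq] at hx ⊢
      rw [dist_eq_norm, show ((WithVal.ofVal x.1 : ℚ) : ℚ_[p]) - (WithVal.ofVal x.2 : ℚ) =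
        -(((WithVal.ofVal x.2 - WithVal.ofVal x.1 : ℚ) : ℚ_[p])) by push_cast; ring,
        norm_neg]
      exact hx
    · rintro ε hε
      refine ⟨ε, hε, fun x hx => ?_⟩
      simp only [Set.mem_preimage, Set.mem_setOf_eq] at hx ⊢
      rw [dist_eq_norm, show ((WithVal.ofVal x.1 : ℚ) : ℚ_[p]) - (WithVal.ofVal x.2 : ℚ) =
        -(((WithVal.ofVal x.2 - WithVal.ofVal x.1 : ℚ) : ℚ_[p])) by push_cast; ring,
        norm_neg] at hx
      exact hx
  refine le_antisymm ?_ ?_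
  · rw [B2.le_basis_iff B1]
    rintro γ -
    obtain ⟨m, hm⟩ := WithZero.ne_zero_iff_exists.mp
      ((map_ne_zero (MonoidWithZeroHom.ValueGroup₀.embedding)).mpr γ.ne_zero)
    refine ⟨(p : ℝ) ^ (Multiplicative.toAdd m), zpow_pos (by positivity) _, fun x hx => ?_⟩
    simp only [Set.mem_setOf_eq] at hx ⊢
    rw [Valuation.restrict_lt_iff_lt_embedding, hval, ← hm]
    rw [show (m : WithZero (Multiplicative ℤ)) =
      ((ofAdd (Multiplicative.toAdd m) : Multiplicative ℤ) : WithZero (Multiplicative ℤ)) from rfl]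
    exact (val_lt_iff p _ _).mpr hx
  · rw [B1.le_basis_iff B2]
    rintro ε hε
    obtain ⟨n, hn⟩ := exists_pow_lt_of_lt_one hε (by rw [inv_lt_one_iff₀]; right; exact hp1 : (p:ℝ)⁻¹ < 1)
    have hpn : ((p : ℚ) ^ n) ≠ 0 := pow_ne_zero _ (by exact_mod_cast hp.out.ne_zero)
    have hvpn : (pHeightOneIdeal p).valuation ℚ ((p : ℚ) ^ n) =
        ((ofAdd (-(n:ℤ)) : Multiplicative ℤ) : WithZero (Multiplicative ℤ)) := by
      rw [val_eq p _ hpn, padicValRat.pow,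
        padicValRat.self hp.out.one_lt]
      simp
    refine ⟨Units.mk0 (Valued.v.restrict
      (WithVal.toVal ((pHeightOneIdeal p).valuation ℚ) ((p : ℚ) ^ n))) (by simp [hp.out.ne_zero]), trivial,
      fun x hx => ?_⟩
    simp only [Set.mem_setOf_eq, Units.val_mk0, Valuation.restrict_lt_iff] at hx ⊢
    rw [hval, WithVal.valued_toVal, hvpn] at hx
    have := (val_lt_iff p (WithVal.ofVal x.2 - WithVal.ofVal x.1) (-(n:ℤ))).mp hx
    have heq : (p:ℝ) ^ (-(n:ℤ)) = (p:ℝ)⁻¹ ^ n := by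
      rw [zpow_neg, ← inv_zpow, zpow_natCast]
    exact lt_trans (heq ▸ this) hn

lemma denseRange_coe : DenseRange ((↑) : ℚ → ℚ_[p]) := by
  rw [Metric.denseRange_iff]
  intro x ε hε
  obtain ⟨r, hr⟩ := Padic.rat_dense (p := p) x hε
  exact ⟨r, by rwa [dist_eq_norm]⟩

/-- `ℚ_[p]` as an abstract completion of `ℚ` with the adic uniformity. -/
noncomputable def padicPkg : AbstractCompletion (WithVal ((pHeightOneIdeal p).valuation ℚ)) := by
  exact { space := ℚ_[p]
          coe := fun x => ((WithVal.ofVal x : ℚ) : ℚ_[p])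
          uniformStruct := inferInstance
          complete := inferInstance
          separation := inferInstance
          isUniformInducing := uniformInducing_coe p
          dense := by
            change DenseRange (((↑) : ℚ → ℚ_[p]) ∘ WithVal.ofVal)
            rw [DenseRange, (WithVal.ofVal_surjective _).range_comp]
            exact denseRange_coe p }

/-- The canonical ring hom from the adic completion to `ℚ_[p]`. -/
noncomputable def toPadic : (pHeightOneIdeal p).adicCompletion ℚ →+* ℚ_[p] :=
  (UniformSpace.Completion.extensionHom
    ((Rat.castHom ℚ_[p]).comp (WithVal.equiv ((pHeightOneIdeal p).valuation ℚ)).toRingHom)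
    (uniformInducing_coe p).uniformContinuous.continuous).comp
    (HeightOneSpectrum.adicCompletion.equiv ℚ (pHeightOneIdeal p)).toRingHom

lemma toPadic_bijective : Function.Bijective (toPadic p) := by
  letI : UniformSpace (UniformSpace.Completion.cPkg
      (α := WithVal ((pHeightOneIdeal p).valuation ℚ))).space :=
    UniformSpace.Completion.cPkg.uniformStruct
  letI : UniformSpace (padicPkg p).space := (padicPkg p).uniformStruct
  have h : (toPadic p : (pHeightOneIdeal p).adicCompletion ℚ → ℚ_[p]) =
      (UniformSpace.Completion.cPkg.compareEquiv (padicPkg p)) ∘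
        (HeightOneSpectrum.adicCompletion.equiv ℚ (pHeightOneIdeal p)) := rfl
  rw [h]
  exact (UniformSpace.Completion.cPkg.compareEquiv (padicPkg p)).bijective.comp
    (HeightOneSpectrum.adicCompletion.equiv ℚ (pHeightOneIdeal p)).bijective


/-- The canonical map `ℚ → adicCompletion`. -/
noncomputable def cc (p : ℕ) [Fact p.Prime] (q : ℚ) : (pHeightOneIdeal p).adicCompletion ℚ :=
  HeightOneSpectrum.adicCompletion.ofCompletion
    (((WithVal.equiv ((pHeightOneIdeal p).valuation ℚ)).symm q :
      WithVal ((pHeightOneIdeal p).valuation ℚ)) :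
      UniformSpace.Completion (WithVal ((pHeightOneIdeal p).valuation ℚ)))

lemma toPadic_coe (q : ℚ) : toPadic p (cc p q) = (q : ℚ_[p]) := by
  exact UniformSpace.Completion.extensionHom_coe
    ((Rat.castHom ℚ_[p]).comp (WithVal.equiv ((pHeightOneIdeal p).valuation ℚ)).toRingHom)
    (uniformInducing_coe p).uniformContinuous.continuous
    ((WithVal.equiv ((pHeightOneIdeal p).valuation ℚ)).symm q)

lemma continuous_toPadic : Continuous (toPadic p) := by
  exact UniformSpace.Completion.continuous_extension.comp
    (HeightOneSpectrum.adicCompletion.continuous_toCompletion ℚ _)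

lemma valued_cc (q : ℚ) : Valued.v (cc p q) = (pHeightOneIdeal p).valuation ℚ (q : ℚ) :=
  by unfold cc; exact HeightOneSpectrum.valuedAdicCompletion_eq_valuation' (pHeightOneIdeal p) q

lemma mem_integers_iff (x : (pHeightOneIdeal p).adicCompletion ℚ) :
    x ∈ (pHeightOneIdeal p).adicCompletionIntegers ℚ ↔ ‖toPadic p x‖ ≤ 1 := by
  have hp0 : (0:ℝ) < p := by exact_mod_cast hp.out.pos
  set A : Set ((pHeightOneIdeal p).adicCompletion ℚ) := {x | Valued.v x ≤ (1 : WithZero (Multiplicative ℤ))} with hA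
  set B : Set ((pHeightOneIdeal p).adicCompletion ℚ) := (toPadic p) ⁻¹' {y | ‖y‖ ≤ 1} with hB
  have hAo : IsOpen A := by
    have h := Valued.isOpen_integer ((pHeightOneIdeal p).adicCompletion ℚ)
    convert h using 1
    ext; rfl
  have hAc : IsClosed A := by
    rw [← isOpen_compl_iff, isOpen_iff_mem_nhds]
    intro z hz
    simp only [Set.mem_compl_iff, hA, Set.mem_setOf_eq, not_le] at hz
    filter_upwards [Valued.locally_const (zero_lt_one.trans hz).ne'] with y hy
    simp only [Set.mem_compl_iff, hA, Set.mem_setOf_eq, not_le, Set.mem_setOf_eq] at hy ⊢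
    rw [hy]; exact hz
  have hBkey : {y : ℚ_[p] | ‖y‖ ≤ 1} = {y : ℚ_[p] | ‖y‖ < p} := by
    ext y
    have := Padic.norm_le_pow_iff_norm_lt_pow_add_one y 0
    simpa using this
  have hBc : IsClosed B := IsClosed.preimage (continuous_toPadic p)
    (isClosed_le continuous_norm continuous_const)
  have hBo : IsOpen B := by
    rw [hB, hBkey]
    exact IsOpen.preimage (continuous_toPadic p)
      (isOpen_lt continuous_norm continuous_const)
  have hdense : Dense (Set.range (cc p)) := by
    exact (HeightOneSpectrum.adicCompletion.ofCompletion_surjective ℚ _).denseRange.comp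
      (UniformSpace.Completion.denseRange_coe.comp
        (WithVal.equiv ((pHeightOneIdeal p).valuation ℚ)).symm.surjective.denseRange
        (UniformSpace.Completion.continuous_coe _))
      (HeightOneSpectrum.adicCompletion.continuous_ofCompletion ℚ _)
  have hagree : ∀ q : ℚ, (cc p q ∈ A ↔ cc p q ∈ B) := by
    intro q
    simp only [hA, hB, Set.mem_setOf_eq, Set.mem_preimage, toPadic_coe, valued_cc]
    exact val_le_one_iff p q
  have hsub : ∀ (S T : Set ((pHeightOneIdeal p).adicCompletion ℚ)), IsOpen S → IsClosed T →
      (∀ q : ℚ, cc p q ∈ S → cc p q ∈ T) → S ⊆ T := by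
    intro S T hS hT hqT
    by_contra hc
    rw [Set.not_subset] at hc
    obtain ⟨z, hzS, hzT⟩ := hc
    obtain ⟨w, hw1, hw2⟩ := hdense.inter_open_nonempty _ (hS.inter hT.isOpen_compl) ⟨z, hzS, hzT⟩
    obtain ⟨q, rfl⟩ := hw2
    exact hw1.2 (hqT q hw1.1)
  have hAB : A = B := le_antisymm
    (hsub A B hAo hBc (fun q hq => (hagree q).mp hq))
    (hsub B A hBo hAc (fun q hq => (hagree q).mpr hq))
  have hx : x ∈ (pHeightOneIdeal p).adicCompletionIntegers ℚ ↔ x ∈ A := by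
    rw [HeightOneSpectrum.mem_adicCompletionIntegers]; rfl
  rw [hx, hAB]; rfl

/-- The adic completion of `ℚ` at `(p)` is ring-isomorphic to `ℚ_[p]`. -/
noncomputable def F : (pHeightOneIdeal p).adicCompletion ℚ ≃+* ℚ_[p] :=
  RingEquiv.ofBijective (toPadic p) (toPadic_bijective p)

lemma F_apply (x : (pHeightOneIdeal p).adicCompletion ℚ) : F p x = toPadic p x := rfl

/-- The ring isomorphism between `ℤ_[p]` and the integers of the adic completion. -/
noncomputable def intsEquiv : ℤ_[p] ≃+* (pHeightOneIdeal p).adicCompletionIntegers ℚ where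
  toFun x := ⟨(F p).symm x.1, by
    rw [mem_integers_iff, ← F_apply, RingEquiv.apply_symm_apply]
    exact x.2⟩
  invFun y := ⟨toPadic p y.1, (mem_integers_iff p y.1).mp y.2⟩
  left_inv x := by
    apply Subtype.ext
    show toPadic p ((F p).symm x.1) = x.1
    rw [← F_apply, RingEquiv.apply_symm_apply]
  right_inv y := by
    apply Subtype.ext
    show (F p).symm (toPadic p y.1) = y.1
    rw [← F_apply, RingEquiv.symm_apply_apply]
  map_mul' x y := by
    apply Subtype.ext
    show (F p).symm ((x * y : ℤ_[p]) : ℚ_[p]) = (F p).symm x.1 * (F p).symm y.1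
    rw [PadicInt.coe_mul, RingEquiv.map_mul]
  map_add' x y := by
    apply Subtype.ext
    show (F p).symm ((x + y : ℤ_[p]) : ℚ_[p]) = (F p).symm x.1 + (F p).symm y.1
    rw [PadicInt.coe_add, RingEquiv.map_add]

lemma toZMod_surjective : Function.Surjective (PadicInt.toZMod : ℤ_[p] →+* ZMod p) := by
  intro a
  exact ⟨(a.val : ℤ_[p]), by rw [map_natCast, ZMod.natCast_val, ZMod.cast_id]⟩

/-- Residue field of `ℤ_[p]` is `ZMod p`. -/
noncomputable def residueEquiv : IsLocalRing.ResidueField ℤ_[p] ≃+* ZMod p :=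
  (Ideal.quotEquivOfEq PadicInt.ker_toZMod.symm).trans
    (RingHom.quotientKerEquivOfSurjective (toZMod_surjective p))


end Aux

/-- The `p`-adic integers are isomorphic, as a ring, to the unit ball of the completion of `ℚ`
with respect to the `(p)`-adic valuation; consequently the residue field of this unit ball is
isomorphic to the field with `p` elements. -/
theorem padicInt_ringEquiv_adicCompletionIntegers (p : ℕ) [hp : Fact p.Prime] :
    Nonempty (ℤ_[p] ≃+* (pHeightOneIdeal p).adicCompletionIntegers ℚ) ∧
      Nonempty
        (IsLocalRing.ResidueField ((pHeightOneIdeal p).adicCompletionIntegers ℚ) ≃+* ZMod p) := by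
  exact ⟨⟨intsEquiv p⟩,
    ⟨(IsLocalRing.ResidueField.mapEquiv (intsEquiv p).symm).trans (residueEquiv p)⟩⟩
end
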